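/- Let V : ℝ² → ℝ be continuously differentiable and suppose there is a constant c such that y·∂V/∂x(x,y) - x·∂V/∂y(x,y) = c for all (x,y). If (x,y) : ℝ → ℝ² satisfies x'' = -∂V/∂x ∘ (x,y) and y'' = -∂V/∂y ∘ (x,y), then the quantity x(t)·y'(t) - y(t)·x'(t) + c·t is constant in t. -/

import Mathlib

theorem stmt_1 (V : ℝ × ℝ → ℝ) (hV : ContDiff ℝ 1 V) (c : ℝ)
    (hrot : ∀ p : ℝ × ℝ, p.2 * fderiv ℝ V p (1, 0) - p.1 * fderiv ℝ V p (0, 1) = c)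
    (x y : ℝ → ℝ)
    (hx : Differentiable ℝ x) (hx' : Differentiable ℝ (deriv x))
    (hy : Differentiable ℝ y) (hy' : Differentiable ℝ (deriv y))
    (hxeq : ∀ t, deriv (deriv x) t = -(fderiv ℝ V (x t, y t) (1, 0)))
    (hyeq : ∀ t, deriv (deriv y) t = -(fderiv ℝ V (x t, y t) (0, 1))) :
    ∀ t s : ℝ,
      x t * deriv y t - y t * deriv x t + c * t =
      x s * deriv y s - y s * deriv x s + c * s := by
  have hc : c = 0 := by
    have := hrot (0, 0)
    simpa using this.symm
  subst hc
  have hg : ∀ t, deriv (fun t => x t * deriv y t - y t * deriv x t) t = 0 := by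
    intro t
    have h1 : HasDerivAt (fun t => x t * deriv y t)
        (deriv x t * deriv y t + x t * deriv (deriv y) t) t :=
      ((hx t).hasDerivAt).mul ((hy' t).hasDerivAt)
    have h2 : HasDerivAt (fun t => y t * deriv x t)
        (deriv y t * deriv x t + y t * deriv (deriv x) t) t :=
      ((hy t).hasDerivAt).mul ((hx' t).hasDerivAt)
    have h : deriv (fun t => x t * deriv y t - y t * deriv x t) t = _ := (h1.sub h2).deriv
    rw [h, hxeq t, hyeq t]
    have := hrot (x t, y t)
    simp only at this
    nlinarith [this]
  have hconst := fun t s =>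
    is_const_of_deriv_eq_zero (f := fun t => x t * deriv y t - y t * deriv x t)
      ((hx.mul hy').sub (hy.mul hx')) hg t s
  intro t s
  simpa using hconst t s
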